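/- Let G be a hypergraph on vertex set {1,...,n} with cover ideal J(G) = ⋂_{e ∈ E(G)} (x_i : i ∈ e) in S = k[x_1,...,x_n], let t ≥ 1, and let x^a be a monomial with exponent vector a ∈ ℕ^n. Then the radical of the colon ideal (J(G)^(t) : x^a), where J(G)^(t) = ⋂_{e ∈ E(G)} (x_i : i ∈ e)^t is the t-th symbolic power, equals the cover ideal J(H) of the subhypergraph H of G whose edges are exactly those edges {i_1,...,i_s} of G with a_{i_1} + ... + a_{i_s} < t. -/

import Mathlib

open MvPolynomial

section Aux

variable {k : Type} [Field k] {n : ℕ}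

local notation "R" => MvPolynomial (Fin n) k

/-- The auxiliary grading map: `X i ↦ C (X i) * u` for `i ∈ e`, `X i ↦ C (X i)` otherwise. -/
noncomputable def psiAux (e : Finset (Fin n)) : MvPolynomial (Fin n) k →ₐ[k] Polynomial (MvPolynomial (Fin n) k) :=
  aeval (fun i => Polynomial.C (X i) * (if i ∈ e then Polynomial.X else 1))

lemma psiAux_mem_pow (e : Finset (Fin n)) {t : ℕ} {f : MvPolynomial (Fin n) k}
    (hf : f ∈ (Ideal.span ((fun i => (X i : MvPolynomial (Fin n) k)) '' ↑e)) ^ t) :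
    (Polynomial.X : Polynomial (MvPolynomial (Fin n) k)) ^ t ∣ psiAux e f := by
  have hmap : Ideal.map ((psiAux (k := k) e).toRingHom)
      (Ideal.span ((fun i => (X i : MvPolynomial (Fin n) k)) '' ↑e))
      ≤ Ideal.span {(Polynomial.X : Polynomial (MvPolynomial (Fin n) k))} := by
    rw [Ideal.map_span, Ideal.span_le]
    rintro - ⟨-, ⟨i, hi, rfl⟩, rfl⟩
    simp only [AlgHom.toRingHom_eq_coe, RingHom.coe_coe, SetLike.mem_coe, Ideal.mem_span_singleton]
    simp only [psiAux, aeval_X]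
    exact ⟨Polynomial.C (X i), by rw [if_pos (Finset.mem_coe.mp hi)]; ring⟩
  have h2 : psiAux e f ∈ Ideal.map ((psiAux (k := k) e).toRingHom)
      ((Ideal.span ((fun i => (X i : MvPolynomial (Fin n) k)) '' ↑e)) ^ t) :=
    Ideal.mem_map_of_mem _ hf
  rw [Ideal.map_pow] at h2
  have h3 := (Ideal.pow_right_mono hmap t) h2
  rw [Ideal.span_singleton_pow, Ideal.mem_span_singleton] at h3
  exact h3

lemma mem_span_of_constantCoeff_psiAux (e : Finset (Fin n)) {f : MvPolynomial (Fin n) k}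
    (h : Polynomial.constantCoeff (psiAux e f) = 0) :
    f ∈ Ideal.span ((fun i => (X i : MvPolynomial (Fin n) k)) '' ↑e) := by
  classical
  -- constantCoeff ∘ psiAux = aeval (fun i => if i ∈ e then 0 else X i)
  have hcomp : ∀ g : MvPolynomial (Fin n) k,
      Polynomial.constantCoeff (psiAux e g) = aeval (fun i => if i ∈ e then 0 else X i) g := by
    intro g
    have : (Polynomial.constantCoeff.comp
        ((psiAux (k := k) e).toRingHom))
        = ((aeval (fun i => if i ∈ e then (0 : MvPolynomial (Fin n) k) else X i) :
            MvPolynomial (Fin n) k →ₐ[k] MvPolynomial (Fin n) k) :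
            MvPolynomial (Fin n) k →+* MvPolynomial (Fin n) k) := by
      apply MvPolynomial.ringHom_ext
      · intro c
        simp [psiAux, algebraMap_eq]
      · intro i
        by_cases hi : i ∈ e <;> simp [psiAux, hi]
    exact congrFun (congrArg (fun φ => φ.toFun) this) g
  rw [hcomp] at h
  have : f ∈ Ideal.span (MvPolynomial.X '' (↑e : Set (Fin n)) : Set (MvPolynomial (Fin n) k)) := by
    rw [mem_ideal_span_X_image]
    intro m hm
    by_contra hcon
    push_neg at hcon
    simp only [Finset.mem_coe] at hcon
    -- every i ∈ e has m i = 0; show coeff m (aeval π f) = coeff m f ≠ 0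
    have hmono : ∀ d : Fin n →₀ ℕ, ∀ c : k,
        aeval (fun i => if i ∈ e then (0 : MvPolynomial (Fin n) k) else X i) (monomial d c)
          = if ∀ i ∈ e, d i = 0 then monomial d c else 0 := by
      intro d c
      rw [aeval_monomial]
      by_cases hd : ∀ i ∈ e, d i = 0
      · rw [if_pos hd]
        have : (d.prod fun i j => (if i ∈ e then (0 : MvPolynomial (Fin n) k) else X i) ^ j)
            = d.prod fun i j => (X i : MvPolynomial (Fin n) k) ^ j := by
          apply Finsupp.prod_congr
          intro i hi
          have : i ∉ e := fun hie => (Finsupp.mem_support_iff.mp hi) (hd i hie)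
          rw [if_neg this]
        rw [this, algebraMap_eq, ← monomial_eq]
      · rw [if_neg hd]
        push_neg at hd
        obtain ⟨i, hie, hdi⟩ := hd
        have hi : i ∈ d.support := Finsupp.mem_support_iff.mpr hdi
        rw [Finsupp.prod, Finset.prod_eq_zero hi (by rw [if_pos hie, zero_pow hdi]), mul_zero]
    have hcoeff : coeff m (aeval (fun i => if i ∈ e then (0 : MvPolynomial (Fin n) k) else X i) f)
        = coeff m f := by
      conv_lhs => rw [f.as_sum, map_sum]
      rw [coeff_sum]
      rw [Finset.sum_eq_single m]
      · rw [hmono, if_pos hcon, coeff_monomial, if_pos rfl]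
      · intro d hd hdm
        rw [hmono]
        by_cases h2 : ∀ i ∈ e, d i = 0
        · rw [if_pos h2, coeff_monomial, if_neg hdm]
        · rw [if_neg h2, coeff_zero]
      · intro hm'
        exact absurd hm hm'
    rw [h, coeff_zero] at hcoeff
    exact (mem_support_iff.mp hm) hcoeff.symm
  simpa using this

lemma prod_X_pow_mem (e : Finset (Fin n)) (a : Fin n → ℕ) :
    (∏ i, (X i : MvPolynomial (Fin n) k) ^ a i)
      ∈ (Ideal.span ((fun i => (X i : MvPolynomial (Fin n) k)) '' ↑e)) ^ (∑ i ∈ e, a i) := by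
  classical
  rw [← Finset.prod_mul_prod_compl e]
  apply Ideal.mul_mem_right
  rw [← Finset.prod_pow_eq_pow_sum]
  · exact Ideal.prod_mem_prod (fun i hi => Ideal.pow_mem_pow
      (Ideal.subset_span (Set.mem_image_of_mem _ (Finset.mem_coe.mpr hi))) _)

lemma psiAux_prod_X_pow (e : Finset (Fin n)) (a : Fin n → ℕ) :
    psiAux e (∏ i, (X i : MvPolynomial (Fin n) k) ^ a i)
      = Polynomial.C (∏ i, (X i : MvPolynomial (Fin n) k) ^ a i)
          * Polynomial.X ^ (∑ i ∈ e, a i) := by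
  classical
  rw [map_prod]
  simp only [map_pow, psiAux, aeval_X]
  rw [Finset.prod_congr rfl (fun i _ => mul_pow (Polynomial.C (X i)) _ (a i)),
    Finset.prod_mul_distrib]
  congr 1
  · simp only [map_prod, map_pow]
  · have : ∀ i : Fin n, ((if i ∈ e then (Polynomial.X : Polynomial (MvPolynomial (Fin n) k)) else 1) ^ a i)
        = if i ∈ e then Polynomial.X ^ a i else 1 := by
      intro i; split_ifs <;> simp
    rw [Finset.prod_congr rfl fun i _ => this i, Finset.prod_ite_mem, Finset.univ_inter,
      Finset.prod_pow_eq_pow_sum]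

end Aux

section Edge

variable {k : Type} [Field k] {n : ℕ}

lemma colon_eq_top_of_le (e : Finset (Fin n)) (a : Fin n → ℕ) {t : ℕ}
    (h : t ≤ ∑ i ∈ e, a i) :
    Submodule.colon
        ((Ideal.span ((fun i => (X i : MvPolynomial (Fin n) k)) '' ↑e)) ^ t)
        (Ideal.span {∏ i, (X i : MvPolynomial (Fin n) k) ^ a i}) = ⊤ := by
  rw [eq_top_iff]
  intro f _
  rw [Ideal.mem_colon_span_singleton]
  exact Ideal.mul_mem_left _ f (Ideal.pow_le_pow_right h (prod_X_pow_mem e a))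

lemma radical_colon_eq_of_lt (e : Finset (Fin n)) (a : Fin n → ℕ) {t : ℕ}
    (h : ∑ i ∈ e, a i < t) :
    Ideal.radical (Submodule.colon
        ((Ideal.span ((fun i => (X i : MvPolynomial (Fin n) k)) '' ↑e)) ^ t)
        (Ideal.span {∏ i, (X i : MvPolynomial (Fin n) k) ^ a i}))
      = Ideal.span ((fun i => (X i : MvPolynomial (Fin n) k)) '' ↑e) := by
  apply le_antisymm
  · intro f hf
    obtain ⟨N, hN⟩ := hf
    rw [Ideal.mem_colon_span_singleton] at hN
    have hdvd := psiAux_mem_pow e hN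
    rw [map_mul, map_pow, psiAux_prod_X_pow] at hdvd
    set s := ∑ i ∈ e, a i with hs
    set u : Polynomial (MvPolynomial (Fin n) k) := Polynomial.X with hu
    have h1 : u ^ (t - s) * u ^ s ∣ (psiAux e f ^ N * Polynomial.C (∏ i, (X i : MvPolynomial (Fin n) k) ^ a i)) * u ^ s := by
      rw [← pow_add, Nat.sub_add_cancel h.le]
      calc u ^ t ∣ psiAux e f ^ N * (Polynomial.C (∏ i, (X i : MvPolynomial (Fin n) k) ^ a i) * u ^ s) := hdvd
        _ = _ := by ring
    have h2 : u ^ (t - s) ∣ psiAux e f ^ N * Polynomial.C (∏ i, (X i : MvPolynomial (Fin n) k) ^ a i) :=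
      (mul_dvd_mul_iff_right (pow_ne_zero s Polynomial.X_ne_zero)).mp h1
    have h3 : u ∣ psiAux e f ^ N * Polynomial.C (∏ i, (X i : MvPolynomial (Fin n) k) ^ a i) :=
      dvd_trans (dvd_pow_self u (by omega : t - s ≠ 0)) h2
    have hp : Prime u := Polynomial.prime_X
    rcases hp.dvd_mul.mp h3 with h4 | h4
    · have h5 := hp.dvd_of_dvd_pow h4
      rw [hu, Polynomial.X_dvd_iff] at h5
      exact mem_span_of_constantCoeff_psiAux e h5
    · exfalso
      rw [hu, Polynomial.X_dvd_iff, Polynomial.coeff_C_zero] at h4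
      exact (Finset.prod_ne_zero_iff.mpr
        (fun i _ => pow_ne_zero _ (MvPolynomial.X_ne_zero i))) h4
  · rw [Ideal.span_le]
    rintro - ⟨i, hi, rfl⟩
    exact ⟨t, by
      rw [Ideal.mem_colon_span_singleton]
      exact Ideal.mul_mem_right _ _ (Ideal.pow_mem_pow
        (Ideal.subset_span (Set.mem_image_of_mem _ hi)) t)⟩

end Edge

lemma radical_finset_inf {R : Type*} [CommRing R] {ι : Type*} (s : Finset ι) (J : ι → Ideal R) :
    Ideal.radical (⨅ i ∈ s, J i) = ⨅ i ∈ s, Ideal.radical (J i) := by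
  classical
  induction s using Finset.induction with
  | empty => simp [Ideal.radical_top]
  | insert _ _ h ih =>
      rw [Finset.iInf_insert, Finset.iInf_insert, Ideal.radical_inf, ih]

lemma colon_iInf {R : Type*} [CommRing R] {ι : Type*} (s : Set ι) (J : ι → Ideal R)
    (N : Ideal R) :
    Submodule.colon (⨅ i ∈ s, J i) N = ⨅ i ∈ s, Submodule.colon (J i) N := by
  ext x
  simp only [Submodule.mem_colon, Submodule.mem_iInf]
  tauto

/-- For a hypergraph `G` on `{1,...,n}` (edge set `E`, nonempty pairwise
incomparable edges), the radical of `(J(G)^{(t)} : x^a)` is the cover ideal of the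
subhypergraph `H` whose edges are the edges `e` of `G` with `∑_{i ∈ e} a i < t`. -/
theorem stmt_0 (k : Type) [Field k] (n t : ℕ) (ht : 1 ≤ t)
    (E : Set (Finset (Fin n)))
    (hne : ∀ e ∈ E, e.Nonempty)
    (hinc : ∀ e ∈ E, ∀ f ∈ E, e ⊆ f → e = f)
    (a : Fin n → ℕ) :
    Ideal.radical
      (Submodule.colon
        (⨅ e ∈ E, (Ideal.span ((fun i => (X i : MvPolynomial (Fin n) k)) '' ↑e)) ^ t)
        (Ideal.span {∏ i, (X i : MvPolynomial (Fin n) k) ^ a i}))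
    = ⨅ e ∈ {e ∈ E | ∑ i ∈ e, a i < t},
        Ideal.span ((fun i => (X i : MvPolynomial (Fin n) k)) '' ↑e) := by
  classical
  have hEfin : E.Finite := Set.toFinite E
  rw [colon_iInf]
  have hre : ∀ S : Finset (Fin n) → Ideal (MvPolynomial (Fin n) k),
      (⨅ e ∈ E, S e) = ⨅ e ∈ hEfin.toFinset, S e := by
    intro S
    apply le_antisymm <;> simp only [le_iInf_iff] <;> intro e he <;>
      refine iInf_le_of_le e (iInf_le_of_le ?_ le_rfl)
    · exact (Set.Finite.mem_toFinset hEfin).mp he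
    · exact (Set.Finite.mem_toFinset hEfin).mpr he
  rw [hre, radical_finset_inf, ← hre]
  apply le_antisymm
  · simp only [le_iInf_iff]
    rintro e ⟨heE, hlt⟩
    refine le_trans (iInf_le_of_le e (iInf_le_of_le heE le_rfl)) ?_
    rw [radical_colon_eq_of_lt e a hlt]
  · simp only [le_iInf_iff]
    intro e heE
    by_cases hlt : ∑ i ∈ e, a i < t
    · refine le_trans (iInf_le_of_le e (iInf_le_of_le ⟨heE, hlt⟩ le_rfl)) ?_
      rw [radical_colon_eq_of_lt e a hlt]
    · rw [colon_eq_top_of_le e a (not_lt.mp hlt), Ideal.radical_top]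
      exact le_top
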